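/- Let p, K be positive integers, let b₁, …, b_p and b̂₁, …, b̂_p be vectors in ℝ^K, and let H be a real K×K matrix. Then max_{i,j ≤ p} |b̂_iᵀ b̂_j − b_iᵀ b_j| ≤ (max_{i≤p} ‖b̂_i − H b_i‖)² + 2·(max_{i≤p} ‖b̂_i − H b_i‖)·(max_{j≤p} ‖H b_j‖) + (max_{i≤p} ‖b_i‖²)·‖Hᵀ H − I_K‖. -/

import Mathlib

open Matrix BigOperators

/-- Spectral (operator) norm of a square real matrix (largest singular value). -/
noncomputable def specNorm {m : ℕ} (A : Matrix (Fin m) (Fin m) ℝ) : ℝ :=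
  ‖Matrix.toEuclideanCLM (𝕜 := ℝ) A‖

/-- Euclidean norm of a vector in `ℝ^K`. -/
noncomputable def vecNorm {m : ℕ} (v : Fin m → ℝ) : ℝ :=
  Real.sqrt (∑ i, v i ^ 2)

lemma vecNorm_nonneg {m : ℕ} (v : Fin m → ℝ) : 0 ≤ vecNorm v :=
  Real.sqrt_nonneg _

lemma vecNorm_eq {m : ℕ} (v : Fin m → ℝ) :
    vecNorm v = ‖(WithLp.equiv 2 (Fin m → ℝ)).symm v‖ := by
  rw [EuclideanSpace.norm_eq]
  simp [vecNorm, sq_abs]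

lemma abs_dot_le {m : ℕ} (f g : Fin m → ℝ) :
    |∑ k, f k * g k| ≤ vecNorm f * vecNorm g := by
  have h := abs_real_inner_le_norm ((WithLp.equiv 2 (Fin m → ℝ)).symm f)
      ((WithLp.equiv 2 (Fin m → ℝ)).symm g)
  rw [vecNorm_eq, vecNorm_eq]
  simpa [PiLp.inner_apply, RCLike.inner_apply, mul_comm] using h

lemma vecNorm_mulVec_le {m : ℕ} (A : Matrix (Fin m) (Fin m) ℝ) (v : Fin m → ℝ) :
    vecNorm (A *ᵥ v) ≤ specNorm A * vecNorm v := by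
  have h := (Matrix.toEuclideanCLM (𝕜 := ℝ) A).le_opNorm
      ((WithLp.equiv 2 (Fin m → ℝ)).symm v)
  rw [show (Matrix.toEuclideanCLM (𝕜 := ℝ) A) ((WithLp.equiv 2 (Fin m → ℝ)).symm v)
      = (WithLp.equiv 2 (Fin m → ℝ)).symm (A *ᵥ v) from rfl] at h
  rw [vecNorm_eq, vecNorm_eq]
  exact h

theorem stmt12 (p K : ℕ)
    (b bhat : Fin p → (Fin K → ℝ)) (H : Matrix (Fin K) (Fin K) ℝ) :
    ∀ i j : Fin p,
      |(∑ k, bhat i k * bhat j k) - ∑ k, b i k * b j k|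
        ≤ (⨆ i', vecNorm (bhat i' - H *ᵥ b i')) ^ 2
          + 2 * (⨆ i', vecNorm (bhat i' - H *ᵥ b i'))
              * (⨆ j', vecNorm (H *ᵥ b j'))
          + (⨆ i', vecNorm (b i') ^ 2) * specNorm (Hᵀ * H - 1) := by
  intro i j
  have : Nonempty (Fin p) := ⟨i⟩
  set u : Fin p → Fin K → ℝ := fun i' => bhat i' - H *ᵥ b i' with hu
  set w : Fin p → Fin K → ℝ := fun i' => H *ᵥ b i' with hw
  set M1 := ⨆ i', vecNorm (u i') with hM1
  set M2 := ⨆ j', vecNorm (w j') with hM2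
  set M3 := ⨆ i', vecNorm (b i') ^ 2 with hM3
  have bdd1 : BddAbove (Set.range fun i' => vecNorm (u i')) :=
    Set.Finite.bddAbove (Set.finite_range _)
  have bdd2 : BddAbove (Set.range fun j' => vecNorm (w j')) :=
    Set.Finite.bddAbove (Set.finite_range _)
  have bdd3 : BddAbove (Set.range fun i' => vecNorm (b i') ^ 2) :=
    Set.Finite.bddAbove (Set.finite_range _)
  have hd : ∀ i', vecNorm (u i') ≤ M1 := fun i' => le_ciSup bdd1 i'
  have hh : ∀ j', vecNorm (w j') ≤ M2 := fun j' => le_ciSup bdd2 j'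
  have hn : ∀ i', vecNorm (b i') ^ 2 ≤ M3 := fun i' => le_ciSup bdd3 i'
  have hM1nn : 0 ≤ M1 := le_trans (vecNorm_nonneg _) (hd i)
  have hM2nn : 0 ≤ M2 := le_trans (vecNorm_nonneg _) (hh i)
  have hM3nn : 0 ≤ M3 := le_trans (sq_nonneg _) (hn i)
  -- norms of b bounded by sqrt M3
  have hnle : ∀ i', vecNorm (b i') ≤ Real.sqrt M3 := fun i' =>
    (Real.le_sqrt (vecNorm_nonneg _) hM3nn).mpr (hn i')
  -- key dot product identity
  have key : ∀ x y : Fin K → ℝ, (∑ k, (H *ᵥ x) k * (H *ᵥ y) k)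
      = ∑ k, x k * ((Hᵀ * H) *ᵥ y) k := by
    intro x y
    have : (H *ᵥ x) ⬝ᵥ (H *ᵥ y) = x ⬝ᵥ ((Hᵀ * H) *ᵥ y) := by
      rw [← Matrix.mulVec_mulVec, Matrix.dotProduct_mulVec x, Matrix.vecMul_transpose]
    simpa [dotProduct] using this
  have h4 : (∑ k, b i k * (((Hᵀ * H - 1) *ᵥ b j) k))
      = (∑ k, w i k * w j k) - ∑ k, b i k * b j k := by
    rw [hw]
    simp only [key (b i) (b j)]
    rw [← Finset.sum_sub_distrib]
    refine Finset.sum_congr rfl fun k _ => ?_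
    rw [Matrix.sub_mulVec, Matrix.one_mulVec]
    simp [mul_sub]
  have identity : (∑ k, bhat i k * bhat j k) - ∑ k, b i k * b j k
      = (∑ k, u i k * u j k) + (∑ k, u i k * w j k) + (∑ k, w i k * u j k)
        + ∑ k, b i k * (((Hᵀ * H - 1) *ᵥ b j) k) := by
    have e1 : ∑ k, bhat i k * bhat j k
        = ∑ k, (u i k * u j k + u i k * w j k + w i k * u j k + w i k * w j k) := by
      refine Finset.sum_congr rfl fun k _ => ?_
      simp only [hu, hw, Pi.sub_apply]
      ring
    rw [e1, h4]
    simp only [Finset.sum_add_distrib]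
    ring
  rw [identity]
  have b1 : |∑ k, u i k * u j k| ≤ M1 ^ 2 := by
    calc |∑ k, u i k * u j k| ≤ vecNorm (u i) * vecNorm (u j) := abs_dot_le _ _
      _ ≤ M1 * M1 := mul_le_mul (hd i) (hd j) (vecNorm_nonneg _) hM1nn
      _ = M1 ^ 2 := (sq M1).symm
  have b2 : |∑ k, u i k * w j k| ≤ M1 * M2 := by
    calc |∑ k, u i k * w j k| ≤ vecNorm (u i) * vecNorm (w j) := abs_dot_le _ _
      _ ≤ M1 * M2 := mul_le_mul (hd i) (hh j) (vecNorm_nonneg _) hM1nn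
  have b3 : |∑ k, w i k * u j k| ≤ M1 * M2 := by
    calc |∑ k, w i k * u j k| ≤ vecNorm (w i) * vecNorm (u j) := abs_dot_le _ _
      _ ≤ M2 * M1 := mul_le_mul (hh i) (hd j) (vecNorm_nonneg _) hM2nn
      _ = M1 * M2 := mul_comm _ _
  have b4 : |∑ k, b i k * (((Hᵀ * H - 1) *ᵥ b j) k)| ≤ M3 * specNorm (Hᵀ * H - 1) := by
    have hs : 0 ≤ specNorm (Hᵀ * H - 1) := norm_nonneg _
    calc |∑ k, b i k * (((Hᵀ * H - 1) *ᵥ b j) k)|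
        ≤ vecNorm (b i) * vecNorm ((Hᵀ * H - 1) *ᵥ b j) := abs_dot_le _ _
      _ ≤ vecNorm (b i) * (specNorm (Hᵀ * H - 1) * vecNorm (b j)) :=
          mul_le_mul_of_nonneg_left (vecNorm_mulVec_le _ _) (vecNorm_nonneg _)
      _ = (vecNorm (b i) * vecNorm (b j)) * specNorm (Hᵀ * H - 1) := by ring
      _ ≤ M3 * specNorm (Hᵀ * H - 1) := by
          refine mul_le_mul_of_nonneg_right ?_ hs
          calc vecNorm (b i) * vecNorm (b j)
              ≤ Real.sqrt M3 * Real.sqrt M3 :=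
                mul_le_mul (hnle i) (hnle j) (vecNorm_nonneg _) (Real.sqrt_nonneg _)
            _ = M3 := Real.mul_self_sqrt hM3nn
  calc |(∑ k, u i k * u j k) + (∑ k, u i k * w j k) + (∑ k, w i k * u j k)
        + ∑ k, b i k * (((Hᵀ * H - 1) *ᵥ b j) k)|
      ≤ |(∑ k, u i k * u j k) + (∑ k, u i k * w j k) + (∑ k, w i k * u j k)|
        + |∑ k, b i k * (((Hᵀ * H - 1) *ᵥ b j) k)| := abs_add_le _ _
    _ ≤ (|∑ k, u i k * u j k| + |∑ k, u i k * w j k| + |∑ k, w i k * u j k|)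
        + |∑ k, b i k * (((Hᵀ * H - 1) *ᵥ b j) k)| := by
        gcongr
        exact (abs_add_three _ _ _)
    _ ≤ (M1 ^ 2 + M1 * M2 + M1 * M2) + M3 * specNorm (Hᵀ * H - 1) := by
        gcongr
    _ = M1 ^ 2 + 2 * M1 * M2 + M3 * specNorm (Hᵀ * H - 1) := by ring
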